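/- arXiv:2111.09765 — 3 statements merged into one kernel-verified Lean document; each statement's English description precedes it below -/
import Mathlib

section
/- Let E ⊆ ℝⁿ be a bounded convex set with nonempty interior, x ∈ ℝⁿ, and suppose the line l(t) = x + t·eₙ meets E in two points p and q. Let P : ℝⁿ → ℝ^{n-1} be the projection forgetting the last coordinate. Then |pₙ − qₙ| · Vol_{n-1}(P E) ≤ C(n) · Vol(E) for a dimensional constant C(n). -/
open Metric Set MeasureTheory Measure
open scoped Pointwise

/-- Lemma 2.2(i): if a bounded convex set `E ⊆ ℝⁿ` with nonempty interior meets the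
vertical line through `x` at two points `p, q`, then
`|pₙ − qₙ| · Vol_{n-1}(P E) ≤ C(n) · Vol(E)` for a dimensional constant `C(n)`,
where `P` is the projection forgetting the last coordinate. -/
theorem stmt1 (d : ℕ) :
    ∃ C : ℝ, 0 < C ∧
      ∀ E : Set (EuclideanSpace ℝ (Fin d) × ℝ), Convex ℝ E → Bornology.IsBounded E →
        (interior E).Nonempty →
        ∀ p ∈ E, ∀ q ∈ E, p.1 = q.1 →
          |p.2 - q.2| * (volume (Prod.fst '' E)).toReal ≤ C * (volume E).toReal := by
  refine ⟨2 ^ (d + 1), by positivity, ?_⟩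
  intro E hconv hbd _hint p hp q hq hpq
  set h : ℝ := |p.2 - q.2| with hh
  have hh0 : 0 ≤ h := abs_nonneg _
  -- finiteness
  have hPEbd : Bornology.IsBounded (Prod.fst '' E) :=
    (LipschitzWith.prod_fst).isBounded_image hbd
  have hPEfin : volume (Prod.fst '' E) ≠ ⊤ := hPEbd.measure_lt_top.ne
  have hEfin : volume E ≠ ⊤ := hbd.measure_lt_top.ne
  -- Haar measure instance on the product
  haveI : (volume : Measure (EuclideanSpace ℝ (Fin d) × ℝ)).IsAddHaarMeasure := by
    rw [Measure.volume_eq_prod]; infer_instance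
  -- the midpoint set A
  set A : Set (EuclideanSpace ℝ (Fin d)) :=
    ((2 : ℝ)⁻¹ • p.1) +ᵥ ((2 : ℝ)⁻¹ • (Prod.fst '' E)) with hA
  have hPEconv : Convex ℝ (Prod.fst '' E) :=
    hconv.is_linear_image (LinearMap.fst ℝ _ _).isLinear
  have hAconv : Convex ℝ A := (hPEconv.smul _).vadd _
  have hAmeas : NullMeasurableSet A volume := hAconv.nullMeasurableSet _
  have hAvol : volume A = ENNReal.ofReal ((2 : ℝ)⁻¹ ^ d) * volume (Prod.fst '' E) := by
    rw [hA, measure_vadd, Measure.addHaar_smul, finrank_euclideanSpace_fin,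
      abs_of_nonneg (by positivity)]
  -- fiber bound: every w ∈ A has a vertical segment of length h/2 inside E
  have hfiber : ∀ w ∈ A, ENNReal.ofReal (h / 2) ≤ volume (Prod.mk w ⁻¹' E) := by
    rintro w ⟨w', ⟨y, ⟨z, hz, rfl⟩, rfl⟩, rfl⟩
    set a : ℝ := (2 : ℝ)⁻¹ * (p.2 + z.2) with ha
    set b : ℝ := (2 : ℝ)⁻¹ * (q.2 + z.2) with hb
    have hm : (2 : ℝ)⁻¹ • (p + z) ∈ E := by
      have := hconv hp hz (by norm_num : (0:ℝ) ≤ 2⁻¹) (by norm_num : (0:ℝ) ≤ 2⁻¹) (by norm_num)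
      simpa [smul_add] using this
    have hm' : (2 : ℝ)⁻¹ • (q + z) ∈ E := by
      have := hconv hq hz (by norm_num : (0:ℝ) ≤ 2⁻¹) (by norm_num : (0:ℝ) ≤ 2⁻¹) (by norm_num)
      simpa [smul_add] using this
    have hsub : Set.uIcc a b ⊆ Prod.mk ((2:ℝ)⁻¹ • p.1 +ᵥ (2:ℝ)⁻¹ • z.1) ⁻¹' E := by
      rw [← segment_eq_uIcc]
      rintro t ⟨u, v, hu, hv, huv, rfl⟩
      have key : (((2:ℝ)⁻¹ • p.1 +ᵥ (2:ℝ)⁻¹ • z.1 : EuclideanSpace ℝ (Fin d)),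
          u • a + v • b) = u • ((2 : ℝ)⁻¹ • (p + z)) + v • ((2 : ℝ)⁻¹ • (q + z)) := by
        apply Prod.ext
        · simp only [Prod.fst_add, Prod.smul_fst, ← hpq, vadd_eq_add]
          rw [smul_smul, smul_smul, ← add_smul,
            show u * 2⁻¹ + v * 2⁻¹ = 2⁻¹ by rw [← add_mul, huv, one_mul], smul_add]
        · simp only [Prod.snd_add, Prod.smul_snd, ha, hb, smul_eq_mul]
      exact Set.mem_preimage.2 (key ▸ hconv hm hm' hu hv huv)
    calc ENNReal.ofReal (h / 2) = volume (Set.uIcc a b) := by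
          rw [Real.volume_interval]
          congr 1
          rw [ha, hb, hh]
          rw [show (2:ℝ)⁻¹ * (q.2 + z.2) - (2:ℝ)⁻¹ * (p.2 + z.2) = (q.2 - p.2) / 2 by ring,
            abs_div, abs_sub_comm]
          norm_num
      _ ≤ volume (Prod.mk ((2:ℝ)⁻¹ • p.1 +ᵥ (2:ℝ)⁻¹ • z.1) ⁻¹' E) := measure_mono hsub
  -- choose a measurable subset of E of full measure
  obtain ⟨S, hSsub, hSmeas, hSE⟩ := (hconv.nullMeasurableSet volume).exists_measurable_subset_ae_eq
  have hVES : volume S = volume E := measure_congr hSE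
  have hNS : volume (E \ S) = 0 := (ae_eq_set.1 hSE).2
  have hae : ∀ᵐ w, volume (Prod.mk w ⁻¹' (E \ S)) = 0 := by
    have := measure_ae_null_of_prod_null (μ := (volume : Measure (EuclideanSpace ℝ (Fin d))))
      (ν := (volume : Measure ℝ)) (s := E \ S) (by rwa [← Measure.volume_eq_prod])
    filter_upwards [this] with w hw using hw
  -- main ENNReal inequality
  have hmain : ENNReal.ofReal (h / 2) * volume A ≤ volume E := by
    have hSrep : volume S = ∫⁻ w, volume (Prod.mk w ⁻¹' S) := by
      rw [show (volume : Measure (EuclideanSpace ℝ (Fin d) × ℝ)) = Measure.prod volume volume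
        from Measure.volume_eq_prod _ _, Measure.prod_apply hSmeas]
    calc ENNReal.ofReal (h / 2) * volume A = ∫⁻ _ in A, ENNReal.ofReal (h / 2) := by
          rw [setLIntegral_const]
      _ ≤ ∫⁻ w in A, volume (Prod.mk w ⁻¹' S) := by
          apply lintegral_mono_ae
          filter_upwards [ae_restrict_mem₀ hAmeas, ae_restrict_of_ae hae] with w hwA hw0
          have hEsplit : volume (Prod.mk w ⁻¹' E) ≤ volume (Prod.mk w ⁻¹' S) := by
            calc volume (Prod.mk w ⁻¹' E)
                ≤ volume (Prod.mk w ⁻¹' S ∪ Prod.mk w ⁻¹' (E \ S)) := by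
                  apply measure_mono; intro t ht
                  by_cases hts : (w, t) ∈ S
                  · exact Or.inl hts
                  · exact Or.inr ⟨ht, hts⟩
              _ ≤ volume (Prod.mk w ⁻¹' S) + volume (Prod.mk w ⁻¹' (E \ S)) :=
                  measure_union_le _ _
              _ = volume (Prod.mk w ⁻¹' S) := by rw [hw0, add_zero]
          exact (hfiber w hwA).trans hEsplit
      _ ≤ ∫⁻ w, volume (Prod.mk w ⁻¹' S) := setLIntegral_le_lintegral _ _
      _ = volume S := hSrep.symm
      _ = volume E := hVES
  -- convert to reals
  rw [hAvol, ← mul_assoc, ← ENNReal.ofReal_mul (by positivity)] at hmain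
  set c : ℝ := h / 2 * (2 : ℝ)⁻¹ ^ d with hc
  have hc0 : 0 ≤ c := by positivity
  have htR : c * (volume (Prod.fst '' E)).toReal ≤ (volume E).toReal := by
    have := ENNReal.toReal_mono hEfin hmain
    rwa [ENNReal.toReal_mul, ENNReal.toReal_ofReal hc0] at this
  have hkey : h = 2 ^ (d + 1) * c := by
    have h2 : (2:ℝ) ^ d * (2:ℝ)⁻¹ ^ d = 1 := by rw [← mul_pow]; norm_num
    rw [hc]; linear_combination (-h) * h2
  calc h * (volume (Prod.fst '' E)).toReal
      = 2 ^ (d + 1) * (c * (volume (Prod.fst '' E)).toReal) := by rw [hkey]; ring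
    _ ≤ 2 ^ (d + 1) * (volume E).toReal := by
        apply mul_le_mul_of_nonneg_left htR (by positivity)
end

section
/- Let Ω ⊆ ℝⁿ be a bounded convex open set and u a convex function on Ω with Monge–Ampère measure det D²u ≥ λ > 0 on Ω. Then Vol(Ω) ≤ C(λ, n) · (sup_Ω |u| )^{n/2}. -/
open Metric Set MeasureTheory
open scoped RealInnerProductSpace ENNReal Pointwise

/-- The subdifferential of a function `u` on a set `s` at a point `y`. -/
def subDiff {V : Type*} [NormedAddCommGroup V] [InnerProductSpace ℝ V]
    (s : Set V) (u : V → ℝ) (y : V) : Set V :=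
  {p | ∀ x ∈ s, u y + ⟪p, x - y⟫ ≤ u x}

/-- The Monge–Ampère (Aleksandrov) measure of `u` on `s`, evaluated on a set `A`:
the Lebesgue measure of the image of `A ∩ s` under the subdifferential map. -/
noncomputable def maMeasure {n : ℕ} (s : Set (EuclideanSpace ℝ (Fin n)))
    (u : EuclideanSpace ℝ (Fin n) → ℝ) (A : Set (EuclideanSpace ℝ (Fin n))) : ℝ≥0∞ :=
  volume (⋃ x ∈ A ∩ s, subDiff s u x)

lemma det_toEuclideanLin (n : ℕ) (U : Matrix (Fin n) (Fin n) ℝ) :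
    LinearMap.det (Matrix.toEuclideanLin U) = U.det := by
  have h := LinearMap.det_conj (Matrix.toLin' U) (WithLp.linearEquiv 2 ℝ (Fin n → ℝ)).symm
  rw [LinearEquiv.symm_symm] at h
  rw [show Matrix.toEuclideanLin U
      = (((WithLp.linearEquiv 2 ℝ (Fin n → ℝ)).symm :
            (Fin n → ℝ) ≃ₗ[ℝ] EuclideanSpace ℝ (Fin n)) :
          (Fin n → ℝ) →ₗ[ℝ] EuclideanSpace ℝ (Fin n))
        ∘ₗ Matrix.toLin' U ∘ₗ
        (((WithLp.linearEquiv 2 ℝ (Fin n → ℝ)) :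
            EuclideanSpace ℝ (Fin n) ≃ₗ[ℝ] (Fin n → ℝ)) :
          EuclideanSpace ℝ (Fin n) →ₗ[ℝ] (Fin n → ℝ)) from by
    ext x; simp [Matrix.toEuclideanLin_apply]]
  rw [h, LinearMap.det_toLin']

lemma vol_box (n : ℕ) (β : ℝ) :
    volume {y : EuclideanSpace ℝ (Fin n) | ∀ i, |y i| ≤ β} = (ENNReal.ofReal (2*β))^n := by
  have hmp := EuclideanSpace.volume_preserving_symm_measurableEquiv_toLp (Fin n)
  have hset : {y : EuclideanSpace ℝ (Fin n) | ∀ i, |y i| ≤ β}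
      = (MeasurableEquiv.toLp 2 (Fin n → ℝ)).symm ⁻¹' (univ.pi fun _ => Icc (-β) β) := by
    ext y
    simp only [Set.mem_preimage, Set.mem_pi, Set.mem_univ,
      forall_true_left, mem_Icc, Set.mem_setOf_eq, abs_le]
    rfl
  rw [hset, hmp.measure_preimage
    ((MeasurableSet.univ_pi fun _ => measurableSet_Icc)).nullMeasurableSet]
  rw [volume_pi_pi]
  simp [Real.volume_Icc]
  congr 1
  congr 1
  rw [← two_mul, ENNReal.ofReal_mul (by norm_num)]; simp

/-- Lemma 2.8: if the Monge–Ampère measure of a convex function `u` on a bounded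
convex domain `Ω` dominates `λ` times Lebesgue measure, then
`Vol(Ω) ≤ C(λ,n) (sup_Ω |u|)^{n/2}`. -/
theorem stmt6 (n : ℕ) (lam : ℝ) (hlam : 0 < lam) :
    ∃ C : ℝ, 0 < C ∧
      ∀ (Ω : Set (EuclideanSpace ℝ (Fin n))) (u : EuclideanSpace ℝ (Fin n) → ℝ) (M : ℝ),
        IsOpen Ω → Convex ℝ Ω → Bornology.IsBounded Ω → Ω.Nonempty →
        ConvexOn ℝ Ω u →
        (∀ A : Set (EuclideanSpace ℝ (Fin n)), MeasurableSet A →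
          ENNReal.ofReal lam * volume (A ∩ Ω) ≤ maMeasure Ω u A) →
        (∀ x ∈ Ω, |u x| ≤ M) →
        (volume Ω).toReal ≤ C * M ^ ((n : ℝ) / 2) := by
  classical
  refine ⟨Real.sqrt ((32*(n+1))^n / lam), Real.sqrt_pos.mpr (by positivity), ?_⟩
  intro Ω u M hopen hconv hbdd hne hu hMA hM
  obtain ⟨x₀, hx₀⟩ := hne
  have hM0 : 0 ≤ M := le_trans (abs_nonneg _) (hM x₀ hx₀)
  obtain ⟨ρ, hρpos, hball⟩ := Metric.isOpen_iff.1 hopen x₀ hx₀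
  set K := closure Ω with hKdef
  have hΩK : Ω ⊆ K := subset_closure
  have hKcpt : IsCompact K := hbdd.isCompact_closure
  -- maximize the determinant over (n+1)-tuples of points of K
  set F : (Fin (n+1) → EuclideanSpace ℝ (Fin n)) → ℝ :=
    fun w => |(Matrix.of fun i j : Fin n => (w i.succ - w 0) j).det| with hFdef
  have hFcont : Continuous F := by
    apply Continuous.abs
    apply Continuous.matrix_det
    apply continuous_matrix
    intro i j
    apply Continuous.sub
    · exact (EuclideanSpace.proj j).continuous.comp (continuous_apply i.succ)
    · exact (EuclideanSpace.proj j).continuous.comp (continuous_apply (0 : Fin (n+1)))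
  have hPicpt : IsCompact (univ.pi fun _ : Fin (n+1) => K) := isCompact_univ_pi fun _ => hKcpt
  have hPine : (univ.pi fun _ : Fin (n+1) => K).Nonempty :=
    ⟨fun _ => x₀, fun i _ => hΩK hx₀⟩
  obtain ⟨w, hwmem, hwmax⟩ := hPicpt.exists_isMaxOn hPine hFcont.continuousOn
  have hwK : ∀ i, w i ∈ K := fun i => hwmem i (mem_univ i)
  set U : Matrix (Fin n) (Fin n) ℝ := Matrix.of fun i j => (w i.succ - w 0) j with hUdef
  set δ : ℝ := |U.det| with hδdef
  have hFw : F w = δ := rfl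
  -- the maximal determinant is positive
  have hδpos : 0 < δ := by
    set w' : Fin (n+1) → EuclideanSpace ℝ (Fin n) :=
      Fin.cons x₀ (fun j : Fin n => x₀ + (ρ/2) • EuclideanSpace.single j 1) with hw'
    have hw'mem : w' ∈ univ.pi fun _ : Fin (n+1) => K := by
      intro i _
      refine Fin.cases ?_ ?_ i
      · exact hΩK hx₀
      · intro j
        apply hΩK; apply hball
        simp only [hw', Fin.cons_succ, mem_ball, dist_self_add_left]
        rw [norm_smul, EuclideanSpace.norm_single]
        simp [abs_of_pos hρpos]
        linarith
    have hcalc : F w' = (ρ/2)^n := by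
      have : (Matrix.of fun i j : Fin n => (w' i.succ - w' 0) j)
          = (ρ/2) • (1 : Matrix (Fin n) (Fin n) ℝ) := by
        ext i j
        simp only [hw', Matrix.of_apply, Fin.cons_succ, Fin.cons_zero]
        simp only [PiLp.sub_apply, PiLp.add_apply, PiLp.smul_apply, EuclideanSpace.single_apply,
          smul_eq_mul, Matrix.smul_apply, Matrix.one_apply]
        by_cases h : i = j <;> simp [h, eq_comm]
      rw [hFdef]
      simp only [this, Matrix.det_smul, Matrix.det_one, mul_one, Fintype.card_fin]
      exact abs_of_nonneg (by positivity)
    have h2 : (0:ℝ) < (ρ/2)^n := by positivity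
    calc (0:ℝ) < (ρ/2)^n := h2
      _ = F w' := hcalc.symm
      _ ≤ F w := hwmax hw'mem
  have hδne : U.det ≠ 0 := fun h => by simp [hδdef, h] at hδpos
  -- the centroid of the maximizing tuple
  set g : EuclideanSpace ℝ (Fin n) := ∑ i : Fin (n+1), ((n:ℝ)+1)⁻¹ • w i with hgdef
  have hwt : ∑ _i : Fin (n+1), ((n:ℝ)+1)⁻¹ = 1 := by
    rw [Finset.sum_const]
    simp only [Finset.card_fin, nsmul_eq_mul, Nat.cast_add, Nat.cast_one]
    rw [mul_inv_cancel₀ (by positivity)]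
  have hgK : g ∈ K := by
    refine (hconv.closure).sum_mem (fun i _ => by positivity) hwt (fun i _ => hwK i)
  have hgsum : ∑ i : Fin (n+1), (w i - g) = 0 := by
    rw [Finset.sum_sub_distrib, Finset.sum_const, Finset.card_fin, sub_eq_zero, hgdef,
      ← Finset.smul_sum, ← Nat.cast_smul_eq_nsmul ℝ, smul_smul]
    rw [show ((n+1 : ℕ) : ℝ) * ((n:ℝ)+1)⁻¹ = 1 by
      push_cast; rw [mul_inv_cancel₀ (by positivity)]]
    rw [one_smul]
  -- the shrunk set A
  set A : Set (EuclideanSpace ℝ (Fin n)) := ((2:ℝ)⁻¹ • g) +ᵥ ((2:ℝ)⁻¹ • Ω) with hAdef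
  have hAmem : ∀ x, x ∈ A ↔ ∃ ω ∈ Ω, x = (2:ℝ)⁻¹ • g + (2:ℝ)⁻¹ • ω := by
    intro x
    constructor
    · rintro ⟨y, ⟨ω, hω, rfl⟩, rfl⟩
      exact ⟨ω, hω, rfl⟩
    · rintro ⟨ω, hω, rfl⟩
      exact ⟨(2:ℝ)⁻¹ • ω, ⟨ω, hω, rfl⟩, rfl⟩
  have hAopen : IsOpen A := (hopen.smul₀ (by norm_num)).vadd _
  have hAsub : A ⊆ Ω := by
    intro x hx
    obtain ⟨ω, hω, rfl⟩ := (hAmem x).1 hx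
    have := hconv.combo_interior_closure_mem_interior
      (by rwa [hopen.interior_eq]) hgK (by norm_num : (0:ℝ) < 2⁻¹) (by norm_num : (0:ℝ) ≤ 2⁻¹)
      (by norm_num)
    rw [hopen.interior_eq] at this
    rw [add_comm]
    exact this
  have volA : volume A = ENNReal.ofReal ((2⁻¹:ℝ)^n) * volume Ω := by
    rw [hAdef, measure_vadd, Measure.addHaar_smul]
    congr 2
    simp [abs_of_nonneg]
  -- key inequality for subgradients at points of A
  have hkey : ∀ x ∈ A, ∀ p ∈ subDiff Ω u x, ∀ y ∈ K, ⟪p, y - g⟫ ≤ 4*M := by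
    intro x hx p hp
    have hxΩ : x ∈ Ω := hAsub hx
    obtain ⟨ω, hω, rfl⟩ := (hAmem x).1 hx
    have hmain : ∀ y ∈ Ω, ⟪p, y - g⟫ ≤ 4*M := by
      intro y hy
      have hy' : (2:ℝ)⁻¹ • ω + (2:ℝ)⁻¹ • y ∈ Ω :=
        hconv hω hy (by norm_num) (by norm_num) (by norm_num)
      have h1 := hp _ hy'
      have hdiff : ((2:ℝ)⁻¹ • ω + (2:ℝ)⁻¹ • y) - ((2:ℝ)⁻¹ • g + (2:ℝ)⁻¹ • ω)
          = (2:ℝ)⁻¹ • (y - g) := by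
        rw [smul_sub]; abel
      rw [hdiff, real_inner_smul_right] at h1
      have hux : -M ≤ u ((2:ℝ)⁻¹ • g + (2:ℝ)⁻¹ • ω) := (abs_le.1 (hM _ hxΩ)).1
      have huy : u ((2:ℝ)⁻¹ • ω + (2:ℝ)⁻¹ • y) ≤ M := (abs_le.1 (hM _ hy')).2
      linarith
    intro y hy
    have hclosed : IsClosed {y : EuclideanSpace ℝ (Fin n) | ⟪p, y - g⟫ ≤ 4*M} :=
      isClosed_le (Continuous.inner continuous_const (continuous_id.sub continuous_const))
        continuous_const
    exact closure_minimal hmain hclosed hy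
  -- the subdifferentials over A land in the dual box Q
  set β : ℝ := 4*M*((n:ℝ)+1) with hβdef
  set Q : Set (EuclideanSpace ℝ (Fin n)) :=
    (Matrix.toEuclideanLin U) ⁻¹' {y : EuclideanSpace ℝ (Fin n) | ∀ i, |y i| ≤ β} with hQdef
  have hQsub : ∀ x ∈ A, subDiff Ω u x ⊆ Q := by
    intro x hx p hp
    have ht_le : ∀ i : Fin (n+1), ⟪p, w i - g⟫ ≤ 4*M := fun i => hkey x hx p hp (w i) (hwK i)
    have ht_sum : ∑ i : Fin (n+1), ⟪p, w i - g⟫ = 0 := by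
      rw [← inner_sum, hgsum, inner_zero_right]
    have ht_ge : ∀ i, -(4*M*(n:ℝ)) ≤ ⟪p, w i - g⟫ := by
      intro i
      have h1 : ∑ j ∈ Finset.univ.erase i, ⟪p, w j - g⟫ ≤ (n:ℝ) * (4*M) := by
        have hcard : (Finset.univ.erase i).card = n := by
          simp [Finset.card_erase_of_mem]
        calc ∑ j ∈ Finset.univ.erase i, ⟪p, w j - g⟫
            ≤ (Finset.univ.erase i).card • (4*M) :=
              Finset.sum_le_card_nsmul _ _ _ (fun j _ => ht_le j)
          _ = (n:ℝ) * (4*M) := by rw [hcard]; simp [nsmul_eq_mul]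
      have h2 := Finset.univ.add_sum_erase (fun j => (⟪p, w j - g⟫ : ℝ)) (Finset.mem_univ i)
      rw [ht_sum] at h2
      linarith
    simp only [hQdef, Set.mem_preimage, Set.mem_setOf_eq]
    intro i
    have happ : (Matrix.toEuclideanLin U p) i = ⟪p, w i.succ - w 0⟫ := by
      rw [Matrix.toEuclideanLin_apply]
      show (U.mulVec fun j => p j) i = _
      rw [PiLp.inner_apply]
      simp only [Matrix.mulVec, dotProduct, hUdef, Matrix.of_apply,
        RCLike.inner_apply, conj_trivial]
    have hv : w i.succ - w 0 = (w i.succ - g) - (w 0 - g) := by abel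
    rw [happ, hv, inner_sub_right, abs_le]
    have a1 := ht_le i.succ
    have a2 := ht_ge i.succ
    have a3 := ht_le 0
    have a4 := ht_ge 0
    constructor
    · rw [hβdef]; linarith
    · rw [hβdef]; linarith
  have volQ : volume Q ≤ ENNReal.ofReal δ⁻¹ * (ENNReal.ofReal (2*β))^n := by
    rw [hQdef, Measure.addHaar_preimage_linearMap volume
      (by rw [det_toEuclideanLin]; exact hδne), vol_box]
    apply le_of_eq
    congr 1
    rw [det_toEuclideanLin, abs_inv]
  have hAmeas : MeasurableSet A := hAopen.measurableSet
  have hAΩ : A ∩ Ω = A := Set.inter_eq_left.mpr hAsub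
  have hF1 : ENNReal.ofReal lam * (ENNReal.ofReal ((2⁻¹:ℝ)^n) * volume Ω)
      ≤ ENNReal.ofReal δ⁻¹ * (ENNReal.ofReal (2*β))^n := by
    calc ENNReal.ofReal lam * (ENNReal.ofReal ((2⁻¹:ℝ)^n) * volume Ω)
        = ENNReal.ofReal lam * volume (A ∩ Ω) := by rw [hAΩ, volA]
      _ ≤ maMeasure Ω u A := hMA A hAmeas
      _ ≤ volume Q := by
          apply measure_mono
          apply Set.iUnion₂_subset
          intro x hx
          exact hQsub x hx.1
      _ ≤ _ := volQ
  -- upper bound for the volume of Ω in terms of the maximal determinant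
  have hF3 : volume Ω ≤ ENNReal.ofReal δ * (ENNReal.ofReal 2)^n := by
    have hsub : Ω ⊆ (w 0) +ᵥ ((Matrix.toEuclideanLin U.transpose) ''
        {y : EuclideanSpace ℝ (Fin n) | ∀ i, |y i| ≤ 1}) := by
      intro x hx
      set b : Fin n → ℝ := fun j => (x - w 0) j with hbdef
      set c : Fin n → ℝ := (U.det)⁻¹ • (Matrix.cramer U.transpose b) with hcdef
      have hcbound : ∀ j, |c j| ≤ 1 := by
        intro j
        have hdet : |(U.updateRow j b).det| ≤ δ := by
          have hwmem' : Function.update w j.succ x ∈ univ.pi fun _ : Fin (n+1) => K := by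
            intro i _
            rcases eq_or_ne i j.succ with rfl | h
            · rw [Function.update_self]; exact hΩK hx
            · rw [Function.update_of_ne h]; exact hwK i
          have hle := hwmax hwmem'
          have heq : (Matrix.of fun i k : Fin n =>
              ((Function.update w j.succ x) i.succ - (Function.update w j.succ x) 0) k)
              = U.updateRow j b := by
            ext i k
            have h0 : (Function.update w j.succ x) 0 = w 0 :=
              Function.update_of_ne (Fin.succ_ne_zero j).symm _ _
            rcases eq_or_ne i j with rfl | h
            · rw [Matrix.of_apply, Function.update_self, h0, Matrix.updateRow_self]
            · rw [Matrix.of_apply,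
                Function.update_of_ne (fun hc' => h (Fin.succ_injective n hc')), h0,
                Matrix.updateRow_ne h]
              rfl
          calc |(U.updateRow j b).det| = F (Function.update w j.succ x) := by
                simp only [hFdef]; rw [heq]
            _ ≤ F w := hle
            _ = δ := rfl
        have habs : |c j| = δ⁻¹ * |(U.updateRow j b).det| := by
          rw [hcdef]
          simp only [Pi.smul_apply, smul_eq_mul, abs_mul, abs_inv]
          rw [Matrix.cramer_apply, Matrix.updateCol_transpose, Matrix.det_transpose]
        rw [habs]
        calc δ⁻¹ * |(U.updateRow j b).det| ≤ δ⁻¹ * δ := by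
              exact mul_le_mul_of_nonneg_left hdet (inv_nonneg.mpr hδpos.le)
          _ = 1 := inv_mul_cancel₀ hδpos.ne'
      have hc : Matrix.toEuclideanLin U.transpose ((WithLp.equiv 2 (Fin n → ℝ)).symm c) = x - w 0 := by
        have hmv : U.transpose.mulVec c = b := by
          rw [hcdef, Matrix.mulVec_smul, Matrix.mulVec_cramer, Matrix.det_transpose,
            smul_smul, inv_mul_cancel₀ hδne, one_smul]
        show WithLp.toLp 2 (Matrix.toLin' U.transpose c) = _
        rw [show Matrix.toLin' U.transpose c = U.transpose.mulVec c from rfl, hmv]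
      refine ⟨x - w 0, ⟨(WithLp.equiv 2 (Fin n → ℝ)).symm c, ?_, hc⟩, by show w 0 + (x - w 0) = x; abel⟩
      intro i
      exact hcbound i
    calc volume Ω ≤ volume ((w 0) +ᵥ ((Matrix.toEuclideanLin U.transpose) ''
          {y : EuclideanSpace ℝ (Fin n) | ∀ i, |y i| ≤ 1})) := measure_mono hsub
      _ = ENNReal.ofReal δ * (ENNReal.ofReal 2)^n := by
          rw [measure_vadd, Measure.addHaar_image_linearMap, det_toEuclideanLin,
            Matrix.det_transpose, vol_box]
          norm_num
          rfl
  -- final arithmetic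
  have hVfin : volume Ω ≠ ⊤ := hbdd.measure_lt_top.ne
  set Vr : ℝ := (volume Ω).toReal with hVrdef
  have hβ0 : 0 ≤ β := by rw [hβdef]; positivity
  have hreal2 : Vr ≤ δ * 2^n := by
    have := ENNReal.toReal_mono
      (ENNReal.mul_ne_top ENNReal.ofReal_ne_top (ENNReal.pow_ne_top ENNReal.ofReal_ne_top)) hF3
    simp only [ENNReal.toReal_mul, ENNReal.toReal_pow] at this
    rwa [ENNReal.toReal_ofReal hδpos.le,
      ENNReal.toReal_ofReal (by norm_num : (0:ℝ) ≤ 2)] at this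
  have hreal1 : lam * ((2⁻¹:ℝ)^n * Vr) ≤ δ⁻¹ * (2*β)^n := by
    have := ENNReal.toReal_mono
      (ENNReal.mul_ne_top ENNReal.ofReal_ne_top (ENNReal.pow_ne_top ENNReal.ofReal_ne_top)) hF1
    simp only [ENNReal.toReal_mul, ENNReal.toReal_pow] at this
    rwa [ENNReal.toReal_ofReal hlam.le, ENNReal.toReal_ofReal (by positivity : (0:ℝ) ≤ (2⁻¹:ℝ)^n),
      ENNReal.toReal_ofReal (inv_nonneg.mpr hδpos.le),
      ENNReal.toReal_ofReal (by positivity : (0:ℝ) ≤ 2*β)] at this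
  have hVr0 : 0 ≤ Vr := ENNReal.toReal_nonneg
  have hV2 : Vr^2 * lam ≤ (32*((n:ℝ)+1))^n * M^n := by
    have hmul : (lam * ((2⁻¹:ℝ)^n * Vr)) * Vr ≤ (δ⁻¹ * (2*β)^n) * (δ * 2^n) :=
      mul_le_mul hreal1 hreal2 hVr0 (by positivity)
    have h2n : (2⁻¹:ℝ)^n * 2^n = 1 := by
      rw [← mul_pow]; norm_num
    have hlhs : ((lam * ((2⁻¹:ℝ)^n * Vr)) * Vr) * (2:ℝ)^n = Vr^2 * lam * ((2⁻¹:ℝ)^n * 2^n) := by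
      ring
    have hrhs : ((δ⁻¹ * (2*β)^n) * (δ * 2^n)) * (2:ℝ)^n = (δ⁻¹ * δ) * ((2*β)^n * (2^n * 2^n)) := by
      ring
    have hfin : Vr^2 * lam ≤ (2*β)^n * ((2:ℝ)^n * 2^n) := by
      have := mul_le_mul_of_nonneg_right hmul (by positivity : (0:ℝ) ≤ (2:ℝ)^n)
      rw [hlhs, h2n, mul_one, hrhs, inv_mul_cancel₀ hδpos.ne', one_mul] at this
      exact this
    calc Vr^2 * lam ≤ (2*β)^n * ((2:ℝ)^n * 2^n) := hfin
      _ = (32*((n:ℝ)+1))^n * M^n := by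
          rw [← mul_pow, ← mul_pow, ← mul_pow, hβdef]
          congr 1
          ring
  -- conclude
  have hfinal : Vr ≤ Real.sqrt ((32*((n:ℝ)+1))^n / lam) * M ^ ((n:ℝ)/2) := by
    have h1 : Vr = Real.sqrt (Vr^2) := (Real.sqrt_sq hVr0).symm
    have h2 : Vr^2 ≤ (32*((n:ℝ)+1))^n / lam * M^n := by
      rw [div_mul_eq_mul_div, le_div_iff₀ hlam]
      exact hV2
    have h3 : M ^ ((n:ℝ)/2) = Real.sqrt (M^n) := by
      rw [Real.sqrt_eq_rpow, ← Real.rpow_natCast M n, ← Real.rpow_mul hM0]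
      congr 1
      ring
    rw [h1, h3, ← Real.sqrt_mul (by positivity : (0:ℝ) ≤ (32*((n:ℝ)+1))^n / lam)]
    exact Real.sqrt_le_sqrt h2
  exact hfinal
end

section
/- Let Ω ⊆ ℝⁿ be a convex domain, u ∈ C(closure Ω) convex, x₀ ∈ ∂Ω, and γ an oblique vector at x₀ (i.e., x₀ + tγ ∈ Ω for small t > 0). Then the directional derivative lim_{t→0⁺} (u(x₀ + tγ) − u(x₀))/t exists (possibly −∞) and equals D_γ⁺u(x₀) := limsup_{t→0⁺} sup{p·γ : p ∈ ∂u(x₀ + tγ)}; moreover, for any C² function v touching u from above (respectively below) at x₀, one has D_γ v(x₀) ≥ (respectively ≤) this common value. -/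
open Metric Set Filter
open scoped RealInnerProductSpace Topology

lemma subDiff_nonempty {n : ℕ} {Ω : Set (EuclideanSpace ℝ (Fin n))}
    {u : EuclideanSpace ℝ (Fin n) → ℝ}
    (hΩo : IsOpen Ω) (hΩc : Convex ℝ Ω)
    (hcvx : ConvexOn ℝ (closure Ω) u) (hcont : ContinuousOn u (closure Ω))
    {y : EuclideanSpace ℝ (Fin n)} (hy : y ∈ Ω) :
    (subDiff (closure Ω) u y).Nonempty := by
  set A : Set ((EuclideanSpace ℝ (Fin n)) × ℝ) := {q | q.1 ∈ Ω ∧ u q.1 < q.2} with hA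
  have hAo : IsOpen A := by
    rw [isOpen_iff_mem_nhds]
    rintro ⟨x, r⟩ ⟨hx, hr⟩
    simp only at hx hr
    have hux : ContinuousAt u x := (hcont.mono subset_closure).continuousAt (hΩo.mem_nhds hx)
    have h1 : ∀ᶠ z in 𝓝 x, z ∈ Ω ∧ u z < (u x + r) / 2 := by
      filter_upwards [hΩo.mem_nhds hx,
        hux.eventually (Iio_mem_nhds (by linarith : u x < (u x + r) / 2))] with z h1 h2
      exact ⟨h1, h2⟩
    have h2 : ∀ᶠ s in 𝓝 r, (u x + r) / 2 < s := eventually_gt_nhds (by linarith)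
    rw [nhds_prod_eq]
    filter_upwards [Filter.prod_mem_prod h1 h2] with q hq
    exact ⟨hq.1.1, lt_trans hq.1.2 hq.2⟩
  have hAc : Convex ℝ A := by
    rintro ⟨x, r⟩ ⟨hx, hr⟩ ⟨x', r'⟩ ⟨hx', hr'⟩ a b ha hb hab
    simp only at hx hr hx' hr'
    refine ⟨hΩc hx hx' ha hb hab, ?_⟩
    show u (a • x + b • x') < a * r + b * r'
    have hcc := hcvx.2 (subset_closure hx) (subset_closure hx') ha hb hab
    simp only [smul_eq_mul] at hcc
    have h1 : a * u x ≤ a * r := mul_le_mul_of_nonneg_left hr.le ha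
    have h2 : b * u x' ≤ b * r' := mul_le_mul_of_nonneg_left hr'.le hb
    rcases (by rcases ha.lt_or_eq with h | h
               exacts [Or.inl h, Or.inr (by linarith)] : 0 < a ∨ 0 < b) with hpos | hpos
    · have h3 : a * u x < a * r := (mul_lt_mul_iff_right₀ hpos).2 hr
      linarith
    · have h3 : b * u x' < b * r' := (mul_lt_mul_iff_right₀ hpos).2 hr'
      linarith
  have hyA : ((y, u y) : (EuclideanSpace ℝ (Fin n)) × ℝ) ∉ A := fun h => lt_irrefl _ h.2
  obtain ⟨f, hf⟩ := geometric_hahn_banach_open_point hAc hAo hyA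
  set c : ℝ := f (0, 1) with hcdef
  have hdecomp : ∀ (x : EuclideanSpace ℝ (Fin n)) (r : ℝ), f (x, r) = f (x, 0) + r * c := by
    intro x r
    have : ((x, r) : (EuclideanSpace ℝ (Fin n)) × ℝ) = (x, (0 : ℝ)) + r • ((0 : EuclideanSpace ℝ (Fin n)), (1 : ℝ)) := by
      simp [Prod.ext_iff]
    rw [this, map_add, map_smul, smul_eq_mul]
  have hc : c < 0 := by
    have h1 := hf (y, u y + 1) ⟨hy, show u y < u y + 1 by linarith⟩
    rw [hdecomp y (u y + 1)] at h1
    rw [hdecomp y (u y)] at h1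
    linarith
  have hcpos : 0 < -c := by linarith
  have key : ∀ x ∈ Ω, f (x, 0) + u x * c ≤ f (y, 0) + u y * c := by
    intro x hx
    have h2 : ∀ s : ℝ, 0 < s → f (x, 0) + (u x + s) * c < f (y, 0) + u y * c := by
      intro s hs
      have h3 := hf (x, u x + s) ⟨hx, show u x < u x + s by linarith⟩
      rw [hdecomp x (u x + s)] at h3
      rw [hdecomp y (u y)] at h3
      linarith
    by_contra h
    push_neg at h
    set d := f (x, 0) + u x * c - (f (y, 0) + u y * c) with hd
    have hdpos : 0 < d := by simp only [hd]; linarith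
    have hcne : (-c) ≠ 0 := ne_of_gt hcpos
    have hc0 : c ≠ 0 := ne_of_lt hc
    have hs : (0 : ℝ) < d / (2 * (-c)) := by positivity
    have h4 := h2 (d / (2 * (-c))) hs
    have h5 : d / (2 * (-c)) * c = -(d / 2) := by field_simp [hc0]
    rw [add_mul, h5] at h4
    linarith
  have hLapp : ∀ x : EuclideanSpace ℝ (Fin n),
      (f.comp (ContinuousLinearMap.inl ℝ (EuclideanSpace ℝ (Fin n)) ℝ)) x = f (x, 0) := fun x => rfl
  set L := f.comp (ContinuousLinearMap.inl ℝ (EuclideanSpace ℝ (Fin n)) ℝ) with hL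
  set p : EuclideanSpace ℝ (Fin n) :=
    (InnerProductSpace.toDual ℝ (EuclideanSpace ℝ (Fin n))).symm ((-c)⁻¹ • L) with hp
  have hpin : ∀ v, ⟪p, v⟫ = (-c)⁻¹ * L v := by
    intro v
    rw [hp, InnerProductSpace.toDual_symm_apply]
    rfl
  have hmain : ∀ x ∈ Ω, u y + ⟪p, x - y⟫ ≤ u x := by
    intro x hx
    rw [hpin, map_sub, hLapp, hLapp]
    rw [← mul_le_mul_iff_right₀ hcpos]
    have hcne : (-c) ≠ 0 := ne_of_gt hcpos
    have expand : -c * (u y + (-c)⁻¹ * (f (x, 0) - f (y, 0)))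
        = -c * u y + (f (x, 0) - f (y, 0)) := by
      have hc0 : c ≠ 0 := ne_of_lt hc
      field_simp [hc0]
      ring
    rw [expand]
    nlinarith [key x hx]
  refine ⟨p, fun x hx => ?_⟩
  haveI hnb : (𝓝[Ω] x).NeBot := mem_closure_iff_nhdsWithin_neBot.1 hx
  have h1 : Tendsto (fun z => u y + ⟪p, z - y⟫) (𝓝[Ω] x) (𝓝 (u y + ⟪p, x - y⟫)) := by
    refine Tendsto.mono_left ?_ nhdsWithin_le_nhds
    exact (continuous_const.add ((innerSL ℝ p).continuous.comp
      (continuous_id.sub continuous_const))).tendsto x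
  have h2 : Tendsto u (𝓝[Ω] x) (𝓝 (u x)) :=
    (hcont x hx).mono_left (nhdsWithin_mono _ subset_closure)
  exact le_of_tendsto_of_tendsto h1 h2 (eventually_nhdsWithin_of_forall hmain)

/-- Lemma 3.5: for a continuous convex function on the closure of a convex domain
and an oblique direction `γ` at a boundary point `x₀`, the one-sided directional
derivative exists (as an extended real), equals the Dini-type derivative
`D_γ⁺u(x₀) = limsup_{t→0⁺} sup{p·γ : p ∈ ∂u(x₀+tγ)}`, and any `C²` function
touching `u` from above (resp. below) at `x₀` has oblique derivative at least
(resp. at most) this common value. -/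
theorem stmt11 (n : ℕ) (Ω : Set (EuclideanSpace ℝ (Fin n)))
    (u : EuclideanSpace ℝ (Fin n) → ℝ) (x₀ γ : EuclideanSpace ℝ (Fin n))
    (hΩo : IsOpen Ω) (hΩc : Convex ℝ Ω) (hne : Ω.Nonempty)
    (hx₀ : x₀ ∈ frontier Ω)
    (hcvx : ConvexOn ℝ (closure Ω) u) (hcont : ContinuousOn u (closure Ω))
    (hγ : ∃ ε : ℝ, 0 < ε ∧ ∀ t ∈ Ioo (0 : ℝ) ε, x₀ + t • γ ∈ Ω) :
    ∃ l : EReal,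
      Tendsto (fun t : ℝ => (((u (x₀ + t • γ) - u x₀) / t : ℝ) : EReal))
        (𝓝[>] (0 : ℝ)) (𝓝 l) ∧
      l = limsup (fun t : ℝ =>
          sSup {r : EReal | ∃ p ∈ subDiff (closure Ω) u (x₀ + t • γ),
            r = ((⟪p, γ⟫ : ℝ) : EReal)}) (𝓝[>] (0 : ℝ)) ∧
      (∀ φ : EuclideanSpace ℝ (Fin n) → ℝ, ContDiffOn ℝ 2 φ (closure Ω) →
        (∀ᶠ x in 𝓝[closure Ω] x₀, u x ≤ φ x) → φ x₀ = u x₀ →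
        l ≤ ((fderivWithin ℝ φ (closure Ω) x₀ γ : ℝ) : EReal)) ∧
      (∀ φ : EuclideanSpace ℝ (Fin n) → ℝ, ContDiffOn ℝ 2 φ (closure Ω) →
        (∀ᶠ x in 𝓝[closure Ω] x₀, φ x ≤ u x) → φ x₀ = u x₀ →
        ((fderivWithin ℝ φ (closure Ω) x₀ γ : ℝ) : EReal) ≤ l) := by
  obtain ⟨ε, hε, hmem⟩ := hγ
  have hx₀c : x₀ ∈ closure Ω := frontier_subset_closure hx₀
  have h0γ : x₀ + (0 : ℝ) • γ = x₀ := by simp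
  have hmapsto : ∀ t ∈ Ico (0 : ℝ) ε, x₀ + t • γ ∈ closure Ω := by
    intro t ht
    rcases eq_or_lt_of_le ht.1 with h | h
    · rw [← h, h0γ]; exact hx₀c
    · exact subset_closure (hmem t ⟨h, ht.2⟩)
  set sR : ℝ → ℝ := fun t => (u (x₀ + t • γ) - u x₀) / t with hsR
  set F : ℝ → EReal := fun t => ((sR t : ℝ) : EReal) with hF
  -- monotonicity of slopes
  have hmono : ∀ t₁ ∈ Ioo (0 : ℝ) ε, ∀ t₂ ∈ Ioo (0 : ℝ) ε, t₁ ≤ t₂ → sR t₁ ≤ sR t₂ := by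
    intro t₁ ht₁ t₂ ht₂ h12
    have ht₁0 : 0 < t₁ := ht₁.1
    have ht₂0 : 0 < t₂ := ht₂.1
    set a : ℝ := t₁ / t₂ with ha
    have ha0 : 0 ≤ a := by positivity
    have ha1 : a ≤ 1 := by rw [ha, div_le_one ht₂0]; exact h12
    have hat : a * t₂ = t₁ := by rw [ha]; field_simp
    have hcomb : (1 - a) • x₀ + a • (x₀ + t₂ • γ) = x₀ + t₁ • γ := by
      rw [smul_add, smul_smul, hat]
      module
    have hconv := hcvx.2 hx₀c (hmapsto t₂ ⟨ht₂0.le, ht₂.2⟩)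
      (by linarith : (0:ℝ) ≤ 1 - a) ha0 (by ring)
    rw [hcomb] at hconv
    simp only [smul_eq_mul] at hconv
    rw [hsR]
    rw [div_le_div_iff₀ ht₁0 ht₂0]
    have h5 := mul_le_mul_of_nonneg_right hconv ht₂0.le
    have h6 : ((1 - a) * u x₀ + a * u (x₀ + t₂ • γ)) * t₂
        = (t₂ - t₁) * u x₀ + t₁ * u (x₀ + t₂ • γ) := by
      rw [ha]; field_simp
    linarith [h5, h6]
  set l : EReal := sInf (F '' Ioo 0 ε) with hl
  -- the limit statement
  have hIoo : Ioo (0:ℝ) ε ∈ 𝓝[>] (0:ℝ) := Ioo_mem_nhdsGT_of_mem ⟨le_refl _, hε⟩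
  have htend : Tendsto F (𝓝[>] (0 : ℝ)) (𝓝 l) := by
    rw [tendsto_order]
    constructor
    · intro b hb
      filter_upwards [hIoo] with t ht
      exact lt_of_lt_of_le hb (sInf_le ⟨t, ht, rfl⟩)
    · intro b hb
      obtain ⟨r, ⟨t₀, ht₀, rfl⟩, hrb⟩ := sInf_lt_iff.1 hb
      filter_upwards [Ioo_mem_nhdsGT_of_mem ⟨le_refl _, ht₀.1⟩] with t ht
      exact lt_of_le_of_lt
        (EReal.coe_le_coe_iff.2 (hmono t ⟨ht.1, ht.2.trans ht₀.2⟩ t₀ ht₀ ht.2.le)) hrb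
  -- path tendsto
  have hpath : Tendsto (fun t : ℝ => x₀ + t • γ) (𝓝[>] (0:ℝ)) (𝓝[closure Ω] x₀) := by
    rw [tendsto_nhdsWithin_iff]
    constructor
    · have hco : Continuous (fun t : ℝ => x₀ + t • γ) :=
        continuous_const.add (continuous_id.smul continuous_const)
      have := (hco.tendsto 0).mono_left (nhdsWithin_le_nhds (s := Ioi (0:ℝ)))
      rwa [h0γ] at this
    · filter_upwards [hIoo] with t ht using subset_closure (hmem t ht)
  have hupath : Tendsto (fun t : ℝ => u (x₀ + t • γ)) (𝓝[>] (0:ℝ)) (𝓝 (u x₀)) := by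
    have h1 : Tendsto u (𝓝[closure Ω] x₀) (𝓝 (u x₀)) := hcont x₀ hx₀c
    exact h1.comp hpath
  -- the sup function
  set S : ℝ → EReal := fun t =>
    sSup {r : EReal | ∃ p ∈ subDiff (closure Ω) u (x₀ + t • γ), r = ((⟪p, γ⟫ : ℝ) : EReal)}
    with hS
  -- lower bound : F t ≤ S t on Ioo 0 ε
  have hFS : ∀ t ∈ Ioo (0:ℝ) ε, F t ≤ S t := by
    intro t ht
    obtain ⟨p, hp⟩ := subDiff_nonempty hΩo hΩc hcvx hcont (hmem t ht)
    have h1 := hp x₀ hx₀c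
    have h2 : x₀ - (x₀ + t • γ) = -(t • γ) := by abel
    rw [h2, inner_neg_right, real_inner_smul_right] at h1
    have h3 : sR t ≤ ⟪p, γ⟫ := by
      rw [hsR, div_le_iff₀ ht.1]
      linarith
    exact le_trans (EReal.coe_le_coe_iff.2 h3) (le_sSup ⟨p, hp, rfl⟩)
  have hlle : l ≤ limsup S (𝓝[>] (0:ℝ)) := by
    have h1 : l = liminf F (𝓝[>] (0:ℝ)) := (htend.liminf_eq).symm
    rw [h1]
    refine le_trans (liminf_le_liminf ?_) (liminf_le_limsup)
    filter_upwards [hIoo] with t ht using hFS t ht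
  -- upper bound
  have hgle : limsup S (𝓝[>] (0:ℝ)) ≤ l := by
    refine le_sInf ?_
    rintro r ⟨t', ht', rfl⟩
    set B : ℝ → ℝ := fun t => (u (x₀ + t' • γ) - u (x₀ + t • γ)) / (t' - t) with hB
    have hevt : ∀ᶠ t in 𝓝[>] (0:ℝ), S t ≤ ((B t : ℝ) : EReal) := by
      filter_upwards [Ioo_mem_nhdsGT_of_mem ⟨le_refl _, ht'.1⟩] with t ht
      refine sSup_le ?_
      rintro r ⟨p, hp, rfl⟩
      have h1 := hp (x₀ + t' • γ) (hmapsto t' ⟨ht'.1.le, ht'.2⟩)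
      have h2 : (x₀ + t' • γ) - (x₀ + t • γ) = (t' - t) • γ := by
        rw [sub_smul]; abel
      rw [h2, real_inner_smul_right] at h1
      refine EReal.coe_le_coe_iff.2 ?_
      rw [hB, le_div_iff₀ (by linarith [ht.2] : (0:ℝ) < t' - t)]
      linarith
    have hBt : Tendsto B (𝓝[>] (0:ℝ)) (𝓝 (sR t')) := by
      have hnum : Tendsto (fun t : ℝ => u (x₀ + t' • γ) - u (x₀ + t • γ))
          (𝓝[>] (0:ℝ)) (𝓝 (u (x₀ + t' • γ) - u x₀)) := tendsto_const_nhds.sub hupath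
      have hden : Tendsto (fun t : ℝ => t' - t) (𝓝[>] (0:ℝ)) (𝓝 (t' - 0)) :=
        tendsto_const_nhds.sub (tendsto_id.mono_left nhdsWithin_le_nhds)
      rw [sub_zero] at hden
      have := hnum.div hden (ne_of_gt ht'.1)
      exact this
    calc limsup S (𝓝[>] (0:ℝ)) ≤ limsup (fun t => ((B t : ℝ) : EReal)) (𝓝[>] (0:ℝ)) :=
          limsup_le_limsup hevt
      _ = F t' := ((EReal.tendsto_coe.2 hBt).limsup_eq)
  -- derivative of test functions along the path
  have hquot : ∀ φ : EuclideanSpace ℝ (Fin n) → ℝ, ContDiffOn ℝ 2 φ (closure Ω) →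
      Tendsto (fun t : ℝ => (φ (x₀ + t • γ) - φ x₀) / t) (𝓝[>] (0:ℝ))
        (𝓝 (fderivWithin ℝ φ (closure Ω) x₀ γ)) := by
    intro φ hφ
    have hd : DifferentiableWithinAt ℝ φ (closure Ω) x₀ :=
      (hφ.differentiableOn (by norm_num)) x₀ hx₀c
    have hder : HasFDerivWithinAt φ (fderivWithin ℝ φ (closure Ω) x₀) (closure Ω) x₀ :=
      hd.hasFDerivWithinAt
    have hcderiv : HasDerivWithinAt (fun t : ℝ => x₀ + t • γ) γ (Ico 0 ε) 0 := by
      have h1 : HasDerivAt (fun t : ℝ => x₀ + t • γ) ((1 : ℝ) • γ) 0 :=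
        ((hasDerivAt_id (0 : ℝ)).smul_const γ).const_add x₀
      simpa using h1.hasDerivWithinAt
    have hpd : HasDerivWithinAt (φ ∘ fun t : ℝ => x₀ + t • γ)
        (fderivWithin ℝ φ (closure Ω) x₀ γ) (Ico 0 ε) 0 :=
      hder.comp_hasDerivWithinAt_of_eq 0 hcderiv (fun t ht => hmapsto t ht) (h0γ).symm
    have hslope := hasDerivWithinAt_iff_tendsto_slope.1 hpd
    have hle : 𝓝[>] (0 : ℝ) ≤ 𝓝[Ico 0 ε \ {0}] (0 : ℝ) :=
      nhdsWithin_le_of_mem (mem_of_superset hIoo (fun t ht => ⟨⟨ht.1.le, ht.2⟩, ne_of_gt ht.1⟩))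
    refine Tendsto.congr' ?_ (hslope.mono_left hle)
    filter_upwards [] with t
    simp [slope_def_field, h0γ, Function.comp]
  refine ⟨l, htend, le_antisymm hlle hgle, ?_, ?_⟩
  · intro φ hφ hub htouch
    have hq := hquot φ hφ
    have hcomp : ∀ᶠ t in 𝓝[>] (0 : ℝ), F t ≤ (((φ (x₀ + t • γ) - φ x₀) / t : ℝ) : EReal) := by
      filter_upwards [hpath.eventually hub, self_mem_nhdsWithin] with t h1 h2
      refine EReal.coe_le_coe_iff.2 ?_
      rw [hsR, ← htouch]
      exact (div_le_div_iff_of_pos_right h2).2 (by linarith)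
    exact le_of_tendsto_of_tendsto htend (EReal.tendsto_coe.2 hq) hcomp
  · intro φ hφ hlb htouch
    have hq := hquot φ hφ
    have hcomp : ∀ᶠ t in 𝓝[>] (0 : ℝ), (((φ (x₀ + t • γ) - φ x₀) / t : ℝ) : EReal) ≤ F t := by
      filter_upwards [hpath.eventually hlb, self_mem_nhdsWithin] with t h1 h2
      refine EReal.coe_le_coe_iff.2 ?_
      rw [hsR, ← htouch]
      exact (div_le_div_iff_of_pos_right h2).2 (by linarith)
    exact le_of_tendsto_of_tendsto (EReal.tendsto_coe.2 hq) htend hcomp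
end
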